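/- Assume: (i) there is a constant C > 0 such that for all n ≥ 1 and all x, y ∈ ℤ, E_μ( |N_n(x) − N_n(y)|² ) ≤ C·n^{1/2}·|x − y|; and (ii) there is a constant K > 0 such that for every n ≥ 2, E_μ( max_{0 ≤ k ≤ n} S_k² ) ≤ K·n·log n. Then for every l ∈ ℤ, ∑_{x ∈ ℤ} E_μ( |N_n(x) − N_n(x+l)|² ) = o(n^{3/2}) as n → ∞, i.e. n^{−3/2}·∑_{x ∈ ℤ} E_μ( |N_n(x) − N_n(x+l)|² ) → 0. -/

import Mathlib

open MeasureTheory Filter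
open scoped ENNReal

/-- Birkhoff sums `S_n = ∑_{k=0}^{n-1} φ ∘ T^k`. -/
def birkS {Ω : Type*} (T : Ω → Ω) (φ : Ω → ℤ) (n : ℕ) (ω : Ω) : ℤ :=
  ∑ k ∈ Finset.range n, φ (T^[k] ω)

/-- Local time `N_n(x) = ∑_{i=0}^{n-1} 1_{S_i = x}`. -/
def locN {Ω : Type*} (T : Ω → Ω) (φ : Ω → ℤ) (n : ℕ) (x : ℤ) (ω : Ω) : ℕ :=
  ∑ i ∈ Finset.range n, if birkS T φ i ω = x then 1 else 0

section aux
set_option linter.unusedSectionVars false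
variable {Ω : Type*} [MeasurableSpace Ω] (T : Ω → Ω) (φ : Ω → ℤ)

lemma measurable_birkS (hT : Measurable T) (hφ : Measurable φ) (k : ℕ) :
    Measurable (birkS T φ k) :=
  Finset.measurable_sum _ fun i _ => hφ.comp (hT.iterate i)

lemma locN_le (n : ℕ) (x : ℤ) (ω : Ω) : locN T φ n x ω ≤ n := by
  calc locN T φ n x ω ≤ ∑ i ∈ Finset.range n, 1 :=
        Finset.sum_le_sum (fun i _ => by split <;> simp)
    _ = n := by simp

lemma measurable_locN (hT : Measurable T) (hφ : Measurable φ) (n : ℕ) (x : ℤ) :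
    Measurable (fun ω => locN T φ n x ω) := by
  apply Finset.measurable_sum
  intro i _
  exact Measurable.ite ((measurable_birkS T φ hT hφ i) (MeasurableSet.singleton x))
    measurable_const measurable_const

lemma tsum_locN (n : ℕ) (ω : Ω) : ∑' x : ℤ, (locN T φ n x ω : ℝ≥0∞) = n := by
  have h : ∀ x : ℤ, (locN T φ n x ω : ℝ≥0∞)
      = ∑ i ∈ Finset.range n, (if birkS T φ i ω = x then 1 else 0) := by
    intro x
    unfold locN
    push_cast
    rfl
  rw [tsum_congr h, Summable.tsum_finsetSum (fun i _ => ENNReal.summable)]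
  have h2 : ∀ i : ℕ, (∑' x : ℤ, (if birkS T φ i ω = x then (1:ℝ≥0∞) else 0)) = 1 := by
    intro i
    have he : (fun x : ℤ => if birkS T φ i ω = x then (1:ℝ≥0∞) else 0)
        = fun x : ℤ => if x = birkS T φ i ω then (1:ℝ≥0∞) else 0 := by
      funext x
      by_cases hx : birkS T φ i ω = x
      · simp [hx]
      · simp [hx, Ne.symm hx]
    rw [he, tsum_ite_eq]
  simp [h2]

lemma exists_of_locN_ne_zero {n : ℕ} {x : ℤ} {ω : Ω} (h : locN T φ n x ω ≠ 0) :
    ∃ i < n, birkS T φ i ω = x := by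
  obtain ⟨i, hi, hne⟩ := Finset.exists_ne_zero_of_sum_ne_zero h
  refine ⟨i, Finset.mem_range.mp hi, ?_⟩
  by_contra hc
  simp [hc] at hne

end aux

/-- Threshold sequence `M(n) ≈ n^(7/8)`. -/
noncomputable def stmtMn (n : ℕ) : ℕ := ⌈(n : ℝ) ^ ((7:ℝ)/8)⌉₊

set_option maxHeartbeats 1000000 in
/-- If `E_μ(|N_n(x) − N_n(y)|²) ≤ C n^{1/2} |x − y|` and
`E_μ(max_{0 ≤ k ≤ n} S_k²) ≤ K n log n`, then for every `l ∈ ℤ`,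
`∑_{x ∈ ℤ} E_μ(|N_n(x) − N_n(x+l)|²) = o(n^{3/2})`. -/
theorem stmt10 {Ω : Type*} [MeasurableSpace Ω] (μ : Measure Ω) [IsProbabilityMeasure μ]
    (T : Ω → Ω) (hT : MeasurePreserving T μ μ)
    (φ : Ω → ℤ) (hφ : Measurable φ)
    (C : ℝ) (hC : 0 < C)
    (hi : ∀ n : ℕ, 1 ≤ n → ∀ x y : ℤ,
      (∫⁻ ω, ENNReal.ofReal (((locN T φ n x ω : ℝ) - (locN T φ n y ω : ℝ)) ^ 2) ∂μ)
        ≤ ENNReal.ofReal (C * (n : ℝ) ^ ((1 : ℝ) / 2) * |(x : ℝ) - (y : ℝ)|))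
    (K : ℝ) (hK : 0 < K)
    (hii : ∀ n : ℕ, 2 ≤ n →
      (∫⁻ ω, ENNReal.ofReal
          ((Finset.range (n + 1)).sup' (Finset.nonempty_range_iff.mpr (Nat.succ_ne_zero n))
            (fun k => ((birkS T φ k ω : ℝ)) ^ 2)) ∂μ)
        ≤ ENNReal.ofReal (K * n * Real.log n)) :
    ∀ l : ℤ, Tendsto (fun n : ℕ =>
        (∑' x : ℤ, ∫⁻ ω,
            ENNReal.ofReal (((locN T φ n x ω : ℝ) - (locN T φ n (x + l) ω : ℝ)) ^ 2) ∂μ)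
          / ENNReal.ofReal ((n : ℝ) ^ ((3 : ℝ) / 2)))
      atTop (nhds 0) := by
  intro l
  have hTm := hT.measurable
  -- the maximal function
  set msq : ℕ → Ω → ℝ := fun n ω =>
    (Finset.range (n + 1)).sup' (Finset.nonempty_range_iff.mpr (Nat.succ_ne_zero n))
      (fun k => ((birkS T φ k ω : ℝ)) ^ 2) with hmsq
  have hmsq_nonneg : ∀ n ω, 0 ≤ msq n ω := by
    intro n ω
    have h0 : ((birkS T φ 0 ω : ℝ)) ^ 2 ≤ msq n ω :=
      Finset.le_sup' (fun k => ((birkS T φ k ω : ℝ)) ^ 2) (Finset.mem_range.mpr (Nat.succ_pos n))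
    have : birkS T φ 0 ω = 0 := by simp [birkS]
    rw [this] at h0
    simpa using h0
  have hmsq_ge : ∀ n ω, ∀ i < n, ((birkS T φ i ω : ℝ)) ^ 2 ≤ msq n ω := by
    intro n ω i hi'
    exact Finset.le_sup' (fun k => ((birkS T φ k ω : ℝ)) ^ 2) (Finset.mem_range.mpr (by omega))
  -- the interval
  set F : ℕ → Finset ℤ := fun n => Finset.Icc (-((stmtMn n : ℤ) + l.natAbs)) ((stmtMn n : ℤ) + l.natAbs)
    with hF
  -- the real bound sequence
  set f : ℕ → ℝ := fun n => ((F n).card : ℝ) * (C * (n:ℝ) ^ ((1:ℝ)/2) * |(l:ℝ)|)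
      + (2*(n:ℝ)) * ((2*(n:ℝ)/((stmtMn n : ℝ))^2) * (K*(n:ℝ)*Real.log n)) with hf
  have key : ∀ n : ℕ, 2 ≤ n →
      (∑' x : ℤ, ∫⁻ ω,
          ENNReal.ofReal (((locN T φ n x ω : ℝ) - (locN T φ n (x + l) ω : ℝ)) ^ 2) ∂μ)
        ≤ ENNReal.ofReal (f n) := by
    intro n hn
    have hn1 : 1 ≤ n := le_trans (by norm_num) hn
    have hn0R : (0:ℝ) < n := by exact_mod_cast hn1
    have hM1 : (1:ℝ) ≤ (stmtMn n : ℝ) := by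
      have h1 : (1:ℝ) ≤ (n:ℝ) ^ ((7:ℝ)/8) :=
        Real.one_le_rpow (by exact_mod_cast hn1) (by norm_num)
      exact h1.trans (Nat.le_ceil _)
    have h2n : ENNReal.ofReal (2*(n:ℝ)) = 2*(n:ℝ≥0∞) := by
      rw [ENNReal.ofReal_mul (by norm_num), ENNReal.ofReal_natCast]
      norm_num
    set c : ℝ := C * (n:ℝ) ^ ((1:ℝ)/2) * |(l:ℝ)| with hc
    have hc0 : 0 ≤ c := by positivity
    set u : ℤ → ℝ≥0∞ := fun x => if x ∈ F n then ENNReal.ofReal c else 0 with hu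
    set w : ℤ → Ω → ℝ≥0∞ := fun x ω =>
      if x ∈ F n then 0 else ((locN T φ n x ω : ℝ≥0∞) + (locN T φ n (x+l) ω : ℝ≥0∞)) with hw
    have habs : ∀ x : ℤ, |(x:ℝ) - ((x + l : ℤ):ℝ)| = |(l:ℝ)| := by
      intro x
      push_cast
      rw [sub_add_cancel_left, abs_neg]
    -- pointwise-in-x bound
    have claim1 : ∀ x : ℤ,
        (∫⁻ ω, ENNReal.ofReal (((locN T φ n x ω : ℝ) - (locN T φ n (x + l) ω : ℝ)) ^ 2) ∂μ)
          ≤ u x + (2*(n:ℝ≥0∞)) * ∫⁻ ω, w x ω ∂μ := by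
      intro x
      by_cases hx : x ∈ F n
      · have h1 := hi n hn1 x (x + l)
        rw [habs x] at h1
        simp only [hu, if_pos hx]
        exact le_trans h1 le_self_add
      · simp only [hu, hw, if_neg hx, zero_add]
        have hpt : ∀ ω, ENNReal.ofReal (((locN T φ n x ω : ℝ) - (locN T φ n (x + l) ω : ℝ)) ^ 2)
            ≤ (2*(n:ℝ≥0∞)) * ((locN T φ n x ω : ℝ≥0∞) + (locN T φ n (x+l) ω : ℝ≥0∞)) := by
          intro ω
          have ha : (0:ℝ) ≤ (locN T φ n x ω : ℝ) := Nat.cast_nonneg _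
          have hb : (0:ℝ) ≤ (locN T φ n (x+l) ω : ℝ) := Nat.cast_nonneg _
          have han : (locN T φ n x ω : ℝ) ≤ n := Nat.cast_le.mpr (locN_le T φ n x ω)
          have hbn : (locN T φ n (x+l) ω : ℝ) ≤ n := Nat.cast_le.mpr (locN_le T φ n (x+l) ω)
          have hsq : ((locN T φ n x ω : ℝ) - (locN T φ n (x + l) ω : ℝ))^2
              ≤ (2*(n:ℝ)) * ((locN T φ n x ω : ℝ) + (locN T φ n (x+l) ω : ℝ)) := by
            nlinarith
          calc ENNReal.ofReal (((locN T φ n x ω : ℝ) - (locN T φ n (x + l) ω : ℝ))^2)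
              ≤ ENNReal.ofReal ((2*(n:ℝ)) * ((locN T φ n x ω : ℝ) + (locN T φ n (x+l) ω : ℝ))) :=
                ENNReal.ofReal_le_ofReal hsq
            _ = (2*(n:ℝ≥0∞)) * ((locN T φ n x ω : ℝ≥0∞) + (locN T φ n (x+l) ω : ℝ≥0∞)) := by
                rw [ENNReal.ofReal_mul (by positivity), ENNReal.ofReal_add ha hb,
                  ENNReal.ofReal_natCast, ENNReal.ofReal_natCast, h2n]
        calc (∫⁻ ω, ENNReal.ofReal (((locN T φ n x ω : ℝ) - (locN T φ n (x + l) ω : ℝ)) ^ 2) ∂μ)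
            ≤ ∫⁻ ω, (2*(n:ℝ≥0∞)) * ((locN T φ n x ω : ℝ≥0∞) + (locN T φ n (x+l) ω : ℝ≥0∞)) ∂μ :=
              lintegral_mono hpt
          _ = (2*(n:ℝ≥0∞)) * ∫⁻ ω, ((locN T φ n x ω : ℝ≥0∞) + (locN T φ n (x+l) ω : ℝ≥0∞)) ∂μ :=
              lintegral_const_mul' _ _ (ENNReal.mul_ne_top (by norm_num) (ENNReal.natCast_ne_top n))
    -- sum of the u part
    have hsum_u : ∑' x : ℤ, u x = ((F n).card : ℝ≥0∞) * ENNReal.ofReal c := by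
      rw [hu, tsum_eq_sum (s := F n) (fun x hx => if_neg hx)]
      rw [Finset.sum_congr rfl (fun x hx => if_pos hx), Finset.sum_const, nsmul_eq_mul]
    -- measurability of w
    have hwm : ∀ x : ℤ, AEMeasurable (w x) μ := by
      intro x
      by_cases hx : x ∈ F n
      · simp only [hw, if_pos hx]; exact aemeasurable_const
      · simp only [hw, if_neg hx]
        exact (((measurable_from_top (f := (Nat.cast : ℕ → ℝ≥0∞))).comp
            (measurable_locN T φ hTm hφ n x)).add
          ((measurable_from_top (f := (Nat.cast : ℕ → ℝ≥0∞))).comp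
            (measurable_locN T φ hTm hφ n (x+l)))).aemeasurable
    -- pointwise-in-ω bound for the tail sum
    have claim4 : ∀ ω, (∑' x : ℤ, w x ω)
        ≤ ENNReal.ofReal ((2*(n:ℝ)/((stmtMn n : ℝ))^2) * msq n ω) := by
      intro ω
      by_cases hbig : ((stmtMn n : ℝ))^2 < msq n ω
      · have h1 : (∑' x : ℤ, w x ω)
            ≤ ∑' x : ℤ, ((locN T φ n x ω : ℝ≥0∞) + (locN T φ n (x+l) ω : ℝ≥0∞)) := by
          apply ENNReal.tsum_le_tsum
          intro x
          by_cases hx : x ∈ F n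
          · simp only [hw, if_pos hx]; exact zero_le
          · simp only [hw, if_neg hx]; exact le_rfl
        have h2 : (∑' x : ℤ, ((locN T φ n x ω : ℝ≥0∞) + (locN T φ n (x+l) ω : ℝ≥0∞)))
            = (n : ℝ≥0∞) + n := by
          rw [ENNReal.tsum_add, tsum_locN]
          congr 1
          have := (Equiv.addRight l).tsum_eq (fun x : ℤ => (locN T φ n x ω : ℝ≥0∞))
          simp only [Equiv.coe_addRight] at this
          rw [this, tsum_locN]
        have h3 : (n : ℝ≥0∞) + n = ENNReal.ofReal (2*(n:ℝ)) := by
          rw [h2n]; ring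
        have h4 : (2*(n:ℝ)) ≤ (2*(n:ℝ)/((stmtMn n : ℝ))^2) * msq n ω := by
          have hMpos : (0:ℝ) < ((stmtMn n : ℝ))^2 := by positivity
          have : (2*(n:ℝ)/((stmtMn n : ℝ))^2) * ((stmtMn n : ℝ))^2 = 2*(n:ℝ) := by
            field_simp
          nlinarith [div_nonneg (by positivity : (0:ℝ) ≤ 2*(n:ℝ)) hMpos.le]
        exact h1.trans (by rw [h2, h3]; exact ENNReal.ofReal_le_ofReal h4)
      · push_neg at hbig
        have hzero : ∀ x : ℤ, w x ω = 0 := by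
          intro x
          by_cases hx : x ∈ F n
          · simp only [hw, if_pos hx]
          · simp only [hw, if_neg hx]
            have hxgt : ((stmtMn n : ℤ) + l.natAbs) < |x| := by
              rw [lt_abs]
              have := hx
              rw [hF, Finset.mem_Icc, not_and_or] at this
              rcases this with h | h <;> push_neg at h <;> omega
            have hvisit : ∀ y : ℤ, locN T φ n y ω ≠ 0 → (y:ℝ)^2 ≤ ((stmtMn n : ℝ))^2 := by
              intro y hy
              obtain ⟨i, hilt, hieq⟩ := exists_of_locN_ne_zero T φ hy
              have := hmsq_ge n ω i hilt
              rw [hieq] at this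
              exact this.trans hbig
            have hsq_of_abs : ∀ y : ℤ, (stmtMn n : ℤ) < |y| → ((stmtMn n : ℝ))^2 < (y:ℝ)^2 := by
              intro y hy
              have h1 : ((stmtMn n : ℝ)) < |(y:ℝ)| := by exact_mod_cast hy
              have h0 : (0:ℝ) ≤ (stmtMn n : ℝ) := Nat.cast_nonneg _
              nlinarith [abs_nonneg ((y:ℤ):ℝ), sq_abs ((y:ℤ):ℝ)]
            have hx1 : locN T φ n x ω = 0 := by
              by_contra h
              have h1 := hvisit x h
              have h2 := hsq_of_abs x (by omega)
              linarith
            have hx2 : locN T φ n (x+l) ω = 0 := by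
              by_contra h
              have h1 := hvisit (x+l) h
              have habs2 : (stmtMn n : ℤ) < |x + l| := by
                have hxl : |x| ≤ |x + l| + |l| := by
                  calc |x| = |(x + l) - l| := by ring_nf
                    _ ≤ |x + l| + |l| := abs_sub _ _
                have : (l.natAbs : ℤ) = |l| := Int.natCast_natAbs l
                omega
              have h2 := hsq_of_abs (x+l) habs2
              linarith
            simp [hx1, hx2]
        rw [tsum_congr hzero]
        simp
    -- integrate claim4
    have claim5 : (∫⁻ ω, (∑' x : ℤ, w x ω) ∂μ)
        ≤ ENNReal.ofReal ((2*(n:ℝ)/((stmtMn n : ℝ))^2) * (K*(n:ℝ)*Real.log n)) := by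
      calc (∫⁻ ω, (∑' x : ℤ, w x ω) ∂μ)
          ≤ ∫⁻ ω, ENNReal.ofReal ((2*(n:ℝ)/((stmtMn n : ℝ))^2) * msq n ω) ∂μ :=
            lintegral_mono claim4
        _ = ∫⁻ ω, ENNReal.ofReal (2*(n:ℝ)/((stmtMn n : ℝ))^2) * ENNReal.ofReal (msq n ω) ∂μ := by
            congr 1
            funext ω
            rw [ENNReal.ofReal_mul (by positivity)]
        _ = ENNReal.ofReal (2*(n:ℝ)/((stmtMn n : ℝ))^2) * ∫⁻ ω, ENNReal.ofReal (msq n ω) ∂μ :=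
            lintegral_const_mul' _ _ ENNReal.ofReal_ne_top
        _ ≤ ENNReal.ofReal (2*(n:ℝ)/((stmtMn n : ℝ))^2) * ENNReal.ofReal (K*(n:ℝ)*Real.log n) :=
            mul_le_mul_right (hii n hn) _
        _ = ENNReal.ofReal ((2*(n:ℝ)/((stmtMn n : ℝ))^2) * (K*(n:ℝ)*Real.log n)) :=
            (ENNReal.ofReal_mul (by positivity)).symm
    -- put everything together
    calc (∑' x : ℤ, ∫⁻ ω,
          ENNReal.ofReal (((locN T φ n x ω : ℝ) - (locN T φ n (x + l) ω : ℝ)) ^ 2) ∂μ)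
        ≤ ∑' x : ℤ, (u x + (2*(n:ℝ≥0∞)) * ∫⁻ ω, w x ω ∂μ) := ENNReal.tsum_le_tsum claim1
      _ = (∑' x : ℤ, u x) + ∑' x : ℤ, (2*(n:ℝ≥0∞)) * ∫⁻ ω, w x ω ∂μ := ENNReal.tsum_add
      _ = ((F n).card : ℝ≥0∞) * ENNReal.ofReal c
          + (2*(n:ℝ≥0∞)) * ∫⁻ ω, (∑' x : ℤ, w x ω) ∂μ := by
          rw [hsum_u, ENNReal.tsum_mul_left, lintegral_tsum hwm]
      _ ≤ ((F n).card : ℝ≥0∞) * ENNReal.ofReal c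
          + (2*(n:ℝ≥0∞)) * ENNReal.ofReal ((2*(n:ℝ)/((stmtMn n : ℝ))^2) * (K*(n:ℝ)*Real.log n)) :=
          add_le_add_right (mul_le_mul_right claim5 _) _
      _ = ENNReal.ofReal (f n) := by
          have hlog : 0 ≤ Real.log n := Real.log_nonneg (by exact_mod_cast hn1)
          have hterm2 : 0 ≤ 2*(n:ℝ) * ((2*(n:ℝ)/((stmtMn n : ℝ))^2) * (K*(n:ℝ)*Real.log n)) := by
            have hX : 0 ≤ K*(n:ℝ)*Real.log n :=
              mul_nonneg (mul_nonneg hK.le (Nat.cast_nonneg n)) hlog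
            exact mul_nonneg (by positivity) (mul_nonneg (by positivity) hX)
          rw [hf, ENNReal.ofReal_add (by positivity) hterm2,
            ENNReal.ofReal_mul (Nat.cast_nonneg _), ENNReal.ofReal_natCast,
            ENNReal.ofReal_mul (p := 2*(n:ℝ)) (by norm_num), h2n, hc]
  -- bounds on stmtMn
  have habsl : |(l:ℝ)| = (l.natAbs : ℝ) := by
    rw [Nat.cast_natAbs, Int.cast_abs]
  have hMlow : ∀ n : ℕ, (n:ℝ) ^ ((7:ℝ)/8) ≤ (stmtMn n : ℝ) := fun n => Nat.le_ceil _
  have hMup : ∀ n : ℕ, 1 ≤ n → (stmtMn n : ℝ) ≤ 2 * (n:ℝ) ^ ((7:ℝ)/8) := by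
    intro n hn1
    have h1 : (1:ℝ) ≤ (n:ℝ) ^ ((7:ℝ)/8) :=
      Real.one_le_rpow (by exact_mod_cast hn1) (by norm_num)
    have h2 := Nat.ceil_lt_add_one (le_trans zero_le_one h1)
    exact le_of_lt (lt_of_lt_of_le h2 (by linarith))
  have hcard : ∀ n : ℕ, ((F n).card : ℝ) = 2*((stmtMn n : ℝ) + (l.natAbs : ℝ)) + 1 := by
    intro n
    have h : (F n).card = ((stmtMn n : ℤ) + l.natAbs + 1 - -((stmtMn n : ℤ) + l.natAbs)).toNat := by
      rw [hF]; exact Int.card_Icc _ _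
    have hnn : (0:ℤ) ≤ (stmtMn n : ℤ) + l.natAbs + 1 - -((stmtMn n : ℤ) + l.natAbs) := by omega
    have h2 : ((F n).card : ℤ) = 2*((stmtMn n : ℤ) + l.natAbs) + 1 := by
      rw [h, Int.toNat_of_nonneg hnn]; ring
    have h3 : ((F n).card : ℝ) = ((2*((stmtMn n : ℤ) + l.natAbs) + 1 : ℤ) : ℝ) := by
      exact_mod_cast congrArg (Int.cast : ℤ → ℝ) h2
    rw [h3]
    push_cast
    rw [habsl]
  -- the real-valued limit
  have hreal : Tendsto (fun n : ℕ => f n / (n:ℝ) ^ ((3:ℝ)/2)) atTop (nhds 0) := by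
    set c1 : ℝ := (5 + 2*(l.natAbs:ℝ)) * C * (l.natAbs:ℝ) with hc1
    have hbound : ∀ᶠ n : ℕ in atTop, f n / (n:ℝ) ^ ((3:ℝ)/2)
        ≤ (c1 + 32*K) * (n:ℝ) ^ (-(1:ℝ)/8) := by
      filter_upwards [eventually_ge_atTop 2] with n hn
      have hN0 : (0:ℝ) < (n:ℝ) := by exact_mod_cast lt_of_lt_of_le Nat.zero_lt_two hn
      have hN1 : (1:ℝ) ≤ (n:ℝ) := by exact_mod_cast le_trans (by norm_num : (1:ℕ) ≤ 2) hn
      set N : ℝ := (n:ℝ) with hNdef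
      set P : ℝ := N ^ ((7:ℝ)/8) with hP
      set Q : ℝ := N ^ ((1:ℝ)/2) with hQ
      set m : ℝ := (stmtMn n : ℝ) with hm
      set L : ℝ := (l.natAbs : ℝ) with hL
      have hL0 : 0 ≤ L := Nat.cast_nonneg _
      have hP1 : 1 ≤ P := Real.one_le_rpow hN1 (by norm_num)
      have hmP : P ≤ m := hMlow n
      have hm2P : m ≤ 2*P := by
        have h := hMup n (by omega)
        rw [← hm, ← hP] at h
        exact h
      have hm0 : (0:ℝ) < m := lt_of_lt_of_le (lt_of_lt_of_le one_pos hP1) hmP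
      have hQ0 : (0:ℝ) ≤ Q := Real.rpow_nonneg hN0.le _
      have hR3 : (0:ℝ) < N ^ ((3:ℝ)/2) := Real.rpow_pos_of_pos hN0 _
      rw [div_le_iff₀ hR3]
      have hE : (c1 + 32*K) * N ^ (-(1:ℝ)/8) * N ^ ((3:ℝ)/2)
          = (c1 + 32*K) * N ^ ((11:ℝ)/8) := by
        rw [mul_assoc, ← Real.rpow_add hN0]
        norm_num
      rw [hE]
      have hPQ : P * Q = N ^ ((11:ℝ)/8) := by
        rw [hP, hQ, ← Real.rpow_add hN0]
        norm_num
      -- term 1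
      have hcoef : 2*(m+L)+1 ≤ (5+2*L)*P := by nlinarith
      have hCQL : (0:ℝ) ≤ C*Q*L := by positivity
      have ht1 : (2*(m+L)+1)*(C*Q*L) ≤ c1*(P*Q) := by
        calc (2*(m+L)+1)*(C*Q*L) ≤ ((5+2*L)*P)*(C*Q*L) :=
              mul_le_mul_of_nonneg_right hcoef hCQL
          _ = c1*(P*Q) := by rw [hc1]; ring
      -- term 2
      have ht2eq : 2*N*((2*N/m^2)*(K*N*Real.log N)) = (4*K*(N^3)*Real.log N)/m^2 := by
        field_simp
        ring
      have hm2 : N ^ ((7:ℝ)/4) ≤ m^2 := by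
        have hPP : P^2 = N ^ ((7:ℝ)/4) := by
          rw [hP, ← Real.rpow_natCast (N ^ ((7:ℝ)/8)) 2, ← Real.rpow_mul hN0.le]
          norm_num
        nlinarith
      have hlogN : Real.log N ≤ 8 * N ^ ((1:ℝ)/8) := by
        calc Real.log N ≤ N ^ ((1:ℝ)/8) / ((1:ℝ)/8) :=
              Real.log_le_rpow_div hN0.le (by norm_num)
          _ = 8 * N ^ ((1:ℝ)/8) := by ring
      have h25 : N^3 * N^((1:ℝ)/8) = N^((25:ℝ)/8) := by
        rw [← Real.rpow_natCast N 3, ← Real.rpow_add hN0]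
        norm_num
      have hlog0 : 0 ≤ Real.log N := Real.log_nonneg hN1
      have hnum : 4*K*(N^3)*Real.log N ≤ 32*K*N^((25:ℝ)/8) := by
        rw [← h25]
        have h4 : (0:ℝ) ≤ 4*K*N^3 := by positivity
        nlinarith [mul_le_mul_of_nonneg_left hlogN h4]
      have ht2 : (4*K*(N^3)*Real.log N)/m^2 ≤ 32*K*N^((11:ℝ)/8) := by
        calc (4*K*(N^3)*Real.log N)/m^2 ≤ (32*K*N^((25:ℝ)/8))/(N^((7:ℝ)/4)) :=
              div_le_div₀ (by positivity) hnum (by positivity) hm2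
          _ = 32*K*N^((11:ℝ)/8) := by
              rw [mul_div_assoc, ← Real.rpow_sub hN0]
              norm_num
      calc f n = (2*(m+L)+1)*(C*Q*L) + 2*N*((2*N/m^2)*(K*N*Real.log N)) := by
            simp only [hf]
            rw [hcard n, habsl]
        _ ≤ c1*(P*Q) + 32*K*N^((11:ℝ)/8) := by
            rw [ht2eq]
            exact add_le_add ht1 ht2
        _ = (c1 + 32*K) * N ^ ((11:ℝ)/8) := by rw [hPQ]; ring
    have hnonneg : ∀ᶠ n : ℕ in atTop, 0 ≤ f n / (n:ℝ) ^ ((3:ℝ)/2) := by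
      filter_upwards [eventually_ge_atTop 2] with n hn
      have hN0 : (0:ℝ) < (n:ℝ) := by exact_mod_cast lt_of_lt_of_le Nat.zero_lt_two hn
      have hN1 : (1:ℝ) ≤ (n:ℝ) := by exact_mod_cast le_trans (by norm_num : (1:ℕ) ≤ 2) hn
      have hlog0 : 0 ≤ Real.log (n:ℝ) := Real.log_nonneg hN1
      apply div_nonneg _ (Real.rpow_nonneg hN0.le _)
      rw [hf]
      have hX : 0 ≤ K*(n:ℝ)*Real.log (n:ℝ) :=
        mul_nonneg (mul_nonneg hK.le (Nat.cast_nonneg n)) hlog0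
      have h1 : (0:ℝ) ≤ ((F n).card : ℝ) * (C * (n:ℝ) ^ ((1:ℝ)/2) * |(l:ℝ)|) := by positivity
      have h2 : (0:ℝ) ≤ 2*(n:ℝ) * ((2*(n:ℝ)/((stmtMn n : ℝ))^2) * (K*(n:ℝ)*Real.log (n:ℝ))) :=
        mul_nonneg (by positivity) (mul_nonneg (by positivity) hX)
      exact add_nonneg h1 h2
    have hlim : Tendsto (fun n : ℕ => (c1 + 32*K) * (n:ℝ) ^ (-(1:ℝ)/8)) atTop (nhds 0) := by
      have h1 : Tendsto (fun x : ℝ => x ^ (-(1:ℝ)/8)) atTop (nhds 0) := by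
        have := tendsto_rpow_neg_atTop (y := (1:ℝ)/8) (by norm_num)
        simpa [neg_div] using this
      have h2 : Tendsto (fun n : ℕ => (n:ℝ) ^ (-(1:ℝ)/8)) atTop (nhds 0) :=
        h1.comp tendsto_natCast_atTop_atTop
      simpa using h2.const_mul (c1 + 32*K)
    exact squeeze_zero' hnonneg hbound hlim
  -- transfer to ℝ≥0∞
  have hEN : Tendsto (fun n : ℕ => ENNReal.ofReal (f n / (n:ℝ) ^ ((3:ℝ)/2))) atTop (nhds 0) := by
    have := ENNReal.tendsto_ofReal hreal
    simpa using this
  refine tendsto_of_tendsto_of_tendsto_of_le_of_le' tendsto_const_nhds hEN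
    (Eventually.of_forall fun n => zero_le) ?_
  filter_upwards [eventually_ge_atTop 2] with n hn
  have hN0 : (0:ℝ) < (n:ℝ) := by exact_mod_cast lt_of_lt_of_le Nat.zero_lt_two hn
  have hpos : (0:ℝ) < (n:ℝ) ^ ((3:ℝ)/2) := Real.rpow_pos_of_pos hN0 _
  rw [ENNReal.ofReal_div_of_pos hpos]
  exact ENNReal.div_le_div_right (key n hn) _
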